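/- Let λ_1,…,λ_N be real numbers, n ≥ 1, c_n = N/n, take the variance profile σ_ij = λ_i (so σ_ij depends only on i) and the centering matrix A = 0, and let (ψ_i, ψ̃_j) ∈ S(ℝ+)^{N+n} satisfy ψ_i(z) = −1/(z(1 + (λ_i²/n) Σ_{j=1}^{n} ψ̃_j(z))) for 1 ≤ i ≤ N and ψ̃_j(z) = −1/(z(1 + (1/n) Σ_{i=1}^{N} λ_i² ψ_i(z))) for 1 ≤ j ≤ n. Then the function f_n(z) = (1/N) Σ_{i=1}^{N} ψ_i(z) satisfies f_n(z) = (1/N) Σ_{i=1}^{N} 1/(λ_i²(1 − c_n − c_n z f_n(z)) − z) for all z ∈ ℂ ∖ ℝ+; moreover (1/n) Σ_{j=1}^{n} ψ̃_j(z) = c_n (1/N) Σ_{i=1}^{N} ψ_i(z) − (1 − c_n)/z. -/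

import Mathlib

open MeasureTheory Matrix Complex Filter
open scoped Topology ComplexOrder

noncomputable section

/-- The set `ℂ ∖ ℝ₊`. -/
def offRplus : Set ℂ := {z : ℂ | ¬ (z.im = 0 ∧ 0 ≤ z.re)}

/-- `f` is the Stieltjes transform of a probability measure carried by `ℝ₊`. -/
def IsStieltjesPM (f : ℂ → ℂ) : Prop :=
  ∃ μ : Measure ℝ, IsProbabilityMeasure μ ∧ μ (Set.Iio 0) = 0 ∧
    ∀ z ∈ offRplus, f z = ∫ t, ((t : ℂ) - z)⁻¹ ∂μ

lemma aux_lb {z : ℂ} (hz : z ∈ offRplus) : 0 < max |z.im| (-z.re) := by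
  rcases (not_and_or.mp hz) with h | h
  · exact lt_max_of_lt_left (abs_pos.mpr h)
  · exact lt_max_of_lt_right (by linarith [not_le.mp h])

lemma aux_dist {z : ℂ} {t : ℝ} (ht : 0 ≤ t) :
    max |z.im| (-z.re) ≤ ‖(t:ℂ) - z‖ := by
  apply max_le
  · have h := Complex.abs_im_le_norm ((t:ℂ) - z)
    have h2 : ((t:ℂ) - z).im = -z.im := by simp
    rw [h2, abs_neg] at h
    exact h
  · have h1 : ((t:ℂ) - z).re ≤ ‖(t:ℂ) - z‖ := Complex.re_le_norm _
    have h2 : ((t:ℂ) - z).re = t - z.re := by simp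
    linarith

lemma stieltjes_ne_zero {f : ℂ → ℂ} (hf : IsStieltjesPM f) {z : ℂ} (hz : z ∈ offRplus) :
    f z ≠ 0 := by
  obtain ⟨μ, hμ, hμ0, hrep⟩ := hf
  set δ := max |z.im| (-z.re) with hδdef
  have hδ : 0 < δ := aux_lb hz
  have hae : ∀ᵐ t ∂μ, 0 ≤ t := by
    rw [ae_iff]
    convert hμ0 using 2
    ext t; simp [not_le]
  have habs : ∀ᵐ (t : ℝ) ∂μ, δ ≤ ‖(t:ℂ) - z‖ :=
    hae.mono fun t ht => aux_dist ht
  have hmeas : AEStronglyMeasurable (fun t : ℝ => ((t:ℂ) - z)⁻¹) μ :=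
    ((Complex.measurable_ofReal.sub measurable_const).inv).aestronglyMeasurable
  have hint : Integrable (fun t : ℝ => ((t:ℂ) - z)⁻¹) μ := by
    refine Integrable.mono' (integrable_const δ⁻¹) hmeas ?_
    filter_upwards [habs] with t ht
    rw [norm_inv]
    exact inv_anti₀ hδ ht
  rw [hrep z hz]
  intro h0
  by_cases him : z.im = 0
  · -- z is a negative real
    have hre : z.re < 0 := by
      by_contra h; exact hz ⟨him, not_lt.mp h⟩
    have h1 : ∫ t, (((t:ℂ) - z)⁻¹).re ∂μ = 0 := by
      have := integral_re (𝕜 := ℂ) hint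
      rw [h0] at this
      simpa using this
    have h2 : 0 < ∫ t, (((t:ℂ) - z)⁻¹).re ∂μ := by
      rw [integral_pos_iff_support_of_nonneg_ae]
      · refine lt_of_lt_of_le ?_ (measure_mono (s := Set.Ici (0:ℝ)) ?_)
        · have hIci : μ (Set.Ici (0:ℝ)) = 1 := by
            rw [← Set.compl_Iio, measure_compl measurableSet_Iio (by rw [hμ0]; exact ENNReal.zero_ne_top)]
            simp [hμ0]
          rw [hIci]; norm_num
        · intro t ht
          simp only [Function.mem_support]
          rw [Complex.inv_re]
          have hret : ((t:ℂ) - z).re = t - z.re := by simp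
          have hpos : 0 < ((t:ℂ) - z).re := by rw [hret]; have : (0:ℝ) ≤ t := ht; linarith
          have hne : ((t:ℂ) - z) ≠ 0 := fun h => by
            rw [h] at hpos; simp at hpos
          exact ne_of_gt (div_pos hpos (Complex.normSq_pos.mpr hne))
      · filter_upwards [hae] with t ht
        rw [Complex.inv_re]
        have hret : ((t:ℂ) - z).re = t - z.re := by simp
        have : 0 ≤ ((t:ℂ) - z).re := by rw [hret]; linarith
        exact div_nonneg this (Complex.normSq_nonneg _)
      · exact hint.re
    linarith
  · -- z.im ≠ 0
    have h1 : ∫ t, (((t:ℂ) - z)⁻¹).im ∂μ = 0 := by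
      have := integral_im (𝕜 := ℂ) hint
      rw [h0] at this
      simpa using this
    have him' : ∀ t : ℝ, (((t:ℂ) - z)⁻¹).im = z.im * (Complex.normSq ((t:ℂ) - z))⁻¹ := by
      intro t
      rw [Complex.inv_im]
      have : ((t:ℂ) - z).im = -z.im := by simp
      rw [this]
      ring
    have hintsq : Integrable (fun t : ℝ => (Complex.normSq ((t:ℂ) - z))⁻¹) μ := by
      refine Integrable.mono' (integrable_const ((δ^2)⁻¹))
        ((Complex.continuous_normSq.measurable.comp
          (Complex.measurable_ofReal.sub measurable_const)).inv.aestronglyMeasurable) ?_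
      filter_upwards [habs] with t ht
      have h5 : δ^2 ≤ Complex.normSq ((t:ℂ) - z) := by
        rw [Complex.normSq_eq_norm_sq]
        exact pow_le_pow_left₀ hδ.le ht 2
      rw [Real.norm_eq_abs, abs_inv, _root_.abs_of_nonneg (Complex.normSq_nonneg _)]
      exact inv_anti₀ (by positivity) h5
    have hne : ∀ t : ℝ, ((t:ℂ) - z) ≠ 0 := fun t h => by
      apply him
      have := congrArg Complex.im h
      simpa using this.symm
    have h2 : ∫ t, (((t:ℂ) - z)⁻¹).im ∂μ
        = z.im * ∫ t, (Complex.normSq ((t:ℂ) - z))⁻¹ ∂μ := by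
      simp_rw [him']
      exact integral_const_mul _ _
    have h3 : 0 < ∫ t, (Complex.normSq ((t:ℂ) - z))⁻¹ ∂μ := by
      rw [integral_pos_iff_support_of_nonneg_ae]
      · have hsup : Function.support (fun t : ℝ => (Complex.normSq ((t:ℂ) - z))⁻¹) = Set.univ := by
          ext t; simp only [Function.mem_support, Set.mem_univ, iff_true]
          exact ne_of_gt (inv_pos.mpr (Complex.normSq_pos.mpr (hne t)))
        rw [hsup, measure_univ]; norm_num
      · exact Eventually.of_forall fun t => inv_nonneg.mpr (Complex.normSq_nonneg _)
      · exact hintsq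
    rw [h2] at h1
    rcases mul_eq_zero.mp h1 with h | h
    · exact him h
    · linarith

/-- Section 3.3: for the variance profile `σ_ij = λ_i` and centering matrix `A = 0`,
any solution `(ψ_i, ψ̃_j)` in `S(ℝ₊)^{N+n}` of the system of `N + n` equations
satisfies, with `c_n = N/n` and `f_n(z) = N⁻¹ ∑ᵢ ψ_i(z)`, the discretized
Marčenko–Pastur type equation
`f_n(z) = N⁻¹ ∑ᵢ 1 / (λ_i² (1 - c_n - c_n z f_n(z)) - z)` on `ℂ ∖ ℝ₊`; moreover
`n⁻¹ ∑ⱼ ψ̃_j(z) = c_n f_n(z) - (1 - c_n)/z`. -/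
theorem stmt_19 (N n : ℕ) (hN : 0 < N) (hn : 0 < n) (lam : Fin N → ℝ)
    (ψ : Fin N → ℂ → ℂ) (ψt : Fin n → ℂ → ℂ)
    (hψ : ∀ i, IsStieltjesPM (ψ i)) (hψt : ∀ j, IsStieltjesPM (ψt j))
    (heq : ∀ z ∈ offRplus, ∀ i : Fin N,
      ψ i z = -(z * (1 + ((lam i : ℂ)^2 / (n : ℂ)) * ∑ j : Fin n, ψt j z))⁻¹)
    (heqt : ∀ z ∈ offRplus, ∀ j : Fin n,
      ψt j z = -(z * (1 + (n : ℂ)⁻¹ * ∑ i : Fin N, (lam i : ℂ)^2 * ψ i z))⁻¹) :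
    ∀ z ∈ offRplus,
      ((N : ℂ)⁻¹ * ∑ i : Fin N, ψ i z)
        = (N : ℂ)⁻¹ * ∑ i : Fin N,
            ((lam i : ℂ)^2 * (1 - (N : ℂ)/(n : ℂ)
              - (N : ℂ)/(n : ℂ) * z * ((N : ℂ)⁻¹ * ∑ k : Fin N, ψ k z)) - z)⁻¹
      ∧ (n : ℂ)⁻¹ * ∑ j : Fin n, ψt j z
          = (N : ℂ)/(n : ℂ) * ((N : ℂ)⁻¹ * ∑ i : Fin N, ψ i z)
            - (1 - (N : ℂ)/(n : ℂ)) / z := by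
  intro z hz
  have hz0 : z ≠ 0 := by
    intro h; exact hz (by rw [h]; exact ⟨rfl, le_refl 0⟩)
  have hnC : (n:ℂ) ≠ 0 := Nat.cast_ne_zero.mpr hn.ne'
  have hNC : (N:ℂ) ≠ 0 := Nat.cast_ne_zero.mpr hN.ne'
  set T := ∑ j : Fin n, ψt j z with hTdef
  set S := ∑ i : Fin N, (lam i : ℂ)^2 * ψ i z with hSdef
  set P := ∑ i : Fin N, ψ i z with hPdef
  -- the common denominator for the ψt is nonzero
  have hden2 : (1 : ℂ) + (n:ℂ)⁻¹ * S ≠ 0 := by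
    intro h
    have j0 : Fin n := ⟨0, hn⟩
    have h1 := heqt z hz j0
    rw [← hSdef, h, mul_zero] at h1
    simp only [_root_.inv_zero, neg_zero] at h1
    exact stieltjes_ne_zero (hψt j0) hz h1
  have hnS : (n:ℂ) + S ≠ 0 := by
    intro h
    apply hden2
    field_simp
    linear_combination h
  -- equation (**): z T (1 + n⁻¹ S) = -n
  have hstar2 : z * T * (1 + (n:ℂ)⁻¹ * S) = -(n:ℂ) := by
    have hw : ∀ j : Fin n, ψt j z = -(z * (1 + (n:ℂ)⁻¹ * S))⁻¹ := by
      intro j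
      rw [heqt z hz j, ← hSdef]
    have hTval : T = (n:ℂ) * (-(z * (1 + (n:ℂ)⁻¹ * S))⁻¹) := by
      rw [hTdef, Finset.sum_congr rfl (fun j _ => hw j), Finset.sum_const,
        Finset.card_univ, Fintype.card_fin, nsmul_eq_mul]
    rw [hTval]
    field_simp [hnS]
  -- denominators for the ψ are nonzero
  have hden1 : ∀ i : Fin N, (1 : ℂ) + ((lam i : ℂ)^2 / (n:ℂ)) * T ≠ 0 := by
    intro i h
    have h1 := heq z hz i
    rw [← hTdef, h, mul_zero] at h1
    simp only [_root_.inv_zero, neg_zero] at h1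
    exact stieltjes_ne_zero (hψ i) hz h1
  have hnT : ∀ i : Fin N, (n:ℂ) + (lam i : ℂ)^2 * T ≠ 0 := by
    intro i h
    apply hden1 i
    field_simp
    linear_combination h
  -- per-i identity
  have hper : ∀ i : Fin N, z * ψ i z * (1 + ((lam i : ℂ)^2 / (n:ℂ)) * T) = -1 := by
    intro i
    have h1 := heq z hz i
    rw [← hTdef] at h1
    rw [h1]
    field_simp [hnT i]
  -- equation (*): z P + (z T / n) S = -N
  have hstar1 : z * P + z * T / (n:ℂ) * S = -(N:ℂ) := by
    have h1 : ∀ i : Fin N,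
        z * ψ i z + z * T / (n:ℂ) * ((lam i : ℂ)^2 * ψ i z) = -1 := by
      intro i
      linear_combination hper i
    calc z * P + z * T / (n:ℂ) * S
        = ∑ i : Fin N, (z * ψ i z + z * T / (n:ℂ) * ((lam i : ℂ)^2 * ψ i z)) := by
          rw [hPdef, hSdef, Finset.mul_sum, Finset.mul_sum, ← Finset.sum_add_distrib]
      _ = ∑ i : Fin N, (-1 : ℂ) := Finset.sum_congr rfl (fun i _ => h1 i)
      _ = -(N:ℂ) := by simp
  -- key: z T = N - n + z P
  have hzT : z * T = (N:ℂ) - (n:ℂ) + z * P := by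
    have h2 : z * T + z * T * (n:ℂ)⁻¹ * S = -(n:ℂ) := by linear_combination hstar2
    have h3 : z * T / (n:ℂ) * S = z * T * (n:ℂ)⁻¹ * S := by ring
    rw [h3] at hstar1
    linear_combination h2 - hstar1
  have hT2 : T = ((N:ℂ) - (n:ℂ) + z * P) / z := by
    field_simp
    linear_combination hzT
  constructor
  · -- first claim
    have hper2 : ∀ i : Fin N,
        ψ i z = ((lam i : ℂ)^2 * (1 - (N:ℂ)/(n:ℂ)
          - (N:ℂ)/(n:ℂ) * z * ((N:ℂ)⁻¹ * P)) - z)⁻¹ := by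
      intro i
      have hden : (lam i : ℂ)^2 * (1 - (N:ℂ)/(n:ℂ) - (N:ℂ)/(n:ℂ) * z * ((N:ℂ)⁻¹ * P)) - z
          = -(z * (1 + ((lam i : ℂ)^2 / (n:ℂ)) * T)) := by
        rw [hT2]
        field_simp
        ring
      rw [hden, inv_neg]
      have h1 := heq z hz i
      rw [← hTdef] at h1
      exact h1
    congr 1
    exact Finset.sum_congr rfl (fun i _ => hper2 i)
  · -- second claim
    have h4 : (n:ℂ)⁻¹ * T = (N:ℂ)/(n:ℂ) * ((N:ℂ)⁻¹ * P) - (1 - (N:ℂ)/(n:ℂ))/z := by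
      rw [hT2]
      field_simp
      ring
    exact h4
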